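/- Let A ∈ ℤ^{m×n}, b ∈ ℤ^m, u ∈ ℤ^n_{≥0}, let x ∈ ℝ^n satisfy Ax = b and 0 ≤ x ≤ u, let z ∈ ℤ^n satisfy Az = b and 0 ≤ z ≤ u, and let y ∈ ℤ^n be a cycle of z − x. Then there exists ε > 0 such that x + εy satisfies A(x + εy) = b and 0 ≤ x + εy ≤ u. -/

import Mathlib

open Matrix

/-- If `x` is LP-feasible, `z` is integer feasible and `y` is a cycle of `z − x`
(i.e. `Ay = 0`, `|y_i| ≤ |(z − x)_i|` and `y_i·(z − x)_i ≥ 0` for all `i`),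
then `x + εy` is LP-feasible for some `ε > 0`. -/
theorem cycle_gives_feasible_lp_direction
    (m n : ℕ)
    (A : Matrix (Fin m) (Fin n) ℤ) (b : Fin m → ℤ) (u : Fin n → ℤ) (hu : ∀ i, 0 ≤ u i)
    (x : Fin n → ℝ)
    (hAx : Matrix.mulVec (fun i j => (A i j : ℝ)) x = fun i => (b i : ℝ))
    (hx : ∀ i, 0 ≤ x i ∧ x i ≤ (u i : ℝ))
    (z : Fin n → ℤ)
    (hAz : A.mulVec z = b)
    (hz : ∀ i, 0 ≤ z i ∧ z i ≤ u i)
    (y : Fin n → ℤ)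
    (hAy : A.mulVec y = 0)
    (hy1 : ∀ i, |(y i : ℝ)| ≤ |(z i : ℝ) - x i|)
    (hy2 : ∀ i, 0 ≤ (y i : ℝ) * ((z i : ℝ) - x i)) :
    ∃ ε : ℝ, 0 < ε ∧
      (Matrix.mulVec (fun i j => (A i j : ℝ)) (x + ε • fun i => (y i : ℝ)) =
        fun i => (b i : ℝ)) ∧
      ∀ i, 0 ≤ (x + ε • fun i => (y i : ℝ)) i ∧
        (x + ε • fun i => (y i : ℝ)) i ≤ (u i : ℝ) := by

  refine ⟨1, one_pos, ?_, ?_⟩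
  · have h0 : Matrix.mulVec (fun i j => (A i j : ℝ)) (fun i => (y i : ℝ)) = 0 := by
      funext i
      have h := congrFun hAy i
      have := congrArg (Int.cast : ℤ → ℝ) h
      simpa [Matrix.mulVec, dotProduct] using this
    erw [Matrix.mulVec_add, hAx]
    funext i
    have := congrFun h0 i
    simp [Matrix.mulVec_smul, this]
  · intro i
    simp only [Pi.add_apply, Pi.smul_apply, smul_eq_mul, one_mul]
    obtain ⟨hx1, hx2⟩ := hx i
    obtain ⟨hz1, hz2⟩ := hz i
    have hz1' : (0 : ℝ) ≤ (z i : ℝ) := by exact_mod_cast hz1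
    have hz2' : ((z i : ℝ)) ≤ (u i : ℝ) := by exact_mod_cast hz2
    rcases lt_trichotomy ((y i : ℝ)) 0 with h | h | h
    · -- y i < 0 : then z i - x i ≤ 0 and y i ≥ z i - x i
      have hzx : (z i : ℝ) - x i ≤ 0 := by nlinarith [hy2 i]
      have habs : |(y i : ℝ)| ≤ |(z i : ℝ) - x i| := hy1 i
      rw [abs_of_neg h, abs_of_nonpos hzx] at habs
      constructor <;> nlinarith
    · constructor <;> nlinarith
    · have hzx : (0 : ℝ) ≤ (z i : ℝ) - x i := by nlinarith [hy2 i]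
      have habs : |(y i : ℝ)| ≤ |(z i : ℝ) - x i| := hy1 i
      rw [abs_of_pos h, abs_of_nonneg hzx] at habs
      constructor <;> nlinarith
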